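/- Let V be a finite metric space partitioned into V_1, …, V_m, and let 1 ≤ p < ∞. Then ∑_{i=1}^m OPT_{k+z}(V_i)^p ≤ 2^p · OPT_{k,z}(V)^p, where OPT_{k+z}(V_i) is the optimal (k+z)-median-type ℓ_p cost of V_i with centers from V_i, and OPT_{k,z}(V) is the optimal k-clustering ℓ_p cost of V with z outliers removed. -/

import Mathlib

open Finset

/-- For a partition `V_1, …, V_m` of a finite metric space `V` and `p ≥ 1`:
`∑_{i=1}^m OPT_{k+z}(V_i)^p ≤ 2^p · OPT_{k,z}(V)^p`, where `OPT_{k+z}(V_i)^p`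
is the optimal (k+z)-clustering ℓ_p cost (p-th powers summed) of `V_i` with
centers from `V_i`, and `OPT_{k,z}(V)^p` is the optimal k-clustering ℓ_p cost
of `V` with at most `z` outliers removed. -/
theorem sum_local_opt_le_global_outliers {V : Type*} [MetricSpace V] [Fintype V] [DecidableEq V]
    (m k z : ℕ) (hk : 1 ≤ k)
    (P : Fin m → Finset V)
    (hdisj : ∀ i j, i ≠ j → Disjoint (P i) (P j))
    (hcover : ∀ v : V, ∃ i, v ∈ P i)
    (hne : ∀ i, (P i).Nonempty)
    (p : ℝ) (hp : 1 ≤ p) :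
    ∑ i, sInf {x : ℝ | ∃ (C : Finset V) (hC : C.Nonempty), C ⊆ P i ∧ C.card ≤ k + z ∧
        x = ∑ v ∈ P i, C.inf' hC (fun c => dist v c ^ p)} ≤
      (2 : ℝ) ^ p *
        sInf {x : ℝ | ∃ (C : Finset V) (hC : C.Nonempty) (Z : Finset V),
          C.card ≤ k ∧ Z.card ≤ z ∧
          x = ∑ v ∈ Finset.univ \ Z, C.inf' hC (fun c => dist v c ^ p)} := by
  classical
  have hp0 : p ≠ 0 := by linarith
  have h2p : (0:ℝ) < (2:ℝ) ^ p := Real.rpow_pos_of_pos (by norm_num) p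
  rcases isEmpty_or_nonempty V with hV | hV
  · -- V empty: then Fin m is empty and the global set is empty
    have hm : IsEmpty (Fin m) := ⟨fun i => (hne i).elim (fun v _ => hV.elim v)⟩
    have hset : {x : ℝ | ∃ (C : Finset V) (hC : C.Nonempty) (Z : Finset V),
          C.card ≤ k ∧ Z.card ≤ z ∧
          x = ∑ v ∈ Finset.univ \ Z, C.inf' hC (fun c => dist v c ^ p)} = ∅ := by
      ext x
      simp only [Set.mem_setOf_eq, Set.mem_empty_iff_false, iff_false]
      rintro ⟨C, hC, -⟩
      exact hV.elim hC.choose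
    rw [hset, Real.sInf_empty, mul_zero, Finset.univ_eq_empty, Finset.sum_empty]
  · -- main case
    -- the global set is nonempty
    obtain ⟨v0⟩ := hV
    have hSne : {x : ℝ | ∃ (C : Finset V) (hC : C.Nonempty) (Z : Finset V),
          C.card ≤ k ∧ Z.card ≤ z ∧
          x = ∑ v ∈ Finset.univ \ Z, C.inf' hC (fun c => dist v c ^ p)}.Nonempty := by
      refine ⟨_, {v0}, ⟨v0, mem_singleton_self v0⟩, ∅, by simpa using hk, by simp, rfl⟩
    rw [mul_comm, ← div_le_iff₀ h2p]
    refine le_csInf hSne ?_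
    rintro x ⟨C, hC, Z, hCk, hZz, rfl⟩
    rw [div_le_iff₀ h2p, mul_comm]
    set g : V → ℝ := fun v => if v ∈ Z then 0 else (2:ℝ) ^ p * C.inf' hC (fun c => dist v c ^ p)
      with hg
    have key : ∀ i : Fin m,
        sInf {x : ℝ | ∃ (C : Finset V) (hC : C.Nonempty), C ⊆ P i ∧ C.card ≤ k + z ∧
          x = ∑ v ∈ P i, C.inf' hC (fun c => dist v c ^ p)} ≤ ∑ v ∈ P i, g v := by
      intro i
      choose π hπ1 hπ2 using fun c : V =>
        (P i).exists_min_image (fun w => dist w c) (hne i)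
      set Ci : Finset V := C.image π ∪ (P i ∩ Z) with hCi
      have hCine : Ci.Nonempty := (hC.image π).mono Finset.subset_union_left
      have hCisub : Ci ⊆ P i := by
        intro w hw
        rcases Finset.mem_union.mp hw with hw | hw
        · obtain ⟨c, -, rfl⟩ := Finset.mem_image.mp hw
          exact hπ1 c
        · exact (Finset.mem_inter.mp hw).1
      have hCicard : Ci.card ≤ k + z := by
        calc Ci.card ≤ (C.image π).card + (P i ∩ Z).card := Finset.card_union_le _ _
          _ ≤ k + z := add_le_add (le_trans (Finset.card_image_le) hCk)
              (le_trans (Finset.card_le_card Finset.inter_subset_right) hZz)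
      have hbdd : BddBelow {x : ℝ | ∃ (C : Finset V) (hC : C.Nonempty), C ⊆ P i ∧
          C.card ≤ k + z ∧ x = ∑ v ∈ P i, C.inf' hC (fun c => dist v c ^ p)} := by
        refine ⟨0, ?_⟩
        rintro x ⟨C', hC', -, -, rfl⟩
        exact Finset.sum_nonneg fun v _ =>
          Finset.le_inf' hC' _ fun c _ => Real.rpow_nonneg dist_nonneg p
      have hmem : (∑ v ∈ P i, Ci.inf' hCine (fun c => dist v c ^ p)) ∈
          {x : ℝ | ∃ (C : Finset V) (hC : C.Nonempty), C ⊆ P i ∧ C.card ≤ k + z ∧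
            x = ∑ v ∈ P i, C.inf' hC (fun c => dist v c ^ p)} :=
        ⟨Ci, hCine, hCisub, hCicard, rfl⟩
      refine le_trans (csInf_le hbdd hmem) (Finset.sum_le_sum ?_)
      intro v hv
      by_cases hvZ : v ∈ Z
      · have hvCi : v ∈ Ci := Finset.mem_union_right _ (Finset.mem_inter.mpr ⟨hv, hvZ⟩)
        have := Finset.inf'_le (fun c => dist v c ^ p) hvCi
        simp only [dist_self, Real.zero_rpow hp0] at this
        simp only [hg, hvZ, if_true]
        exact this
      · obtain ⟨c, hcC, hceq⟩ := C.exists_mem_eq_inf' hC (fun c => dist v c ^ p)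
        have hπCi : π c ∈ Ci :=
          Finset.mem_union_left _ (Finset.mem_image_of_mem π hcC)
        have h1 : Ci.inf' hCine (fun c => dist v c ^ p) ≤ dist v (π c) ^ p :=
          Finset.inf'_le _ hπCi
        have h2 : dist v (π c) ≤ 2 * dist v c := by
          have := hπ2 c v hv
          have htri := dist_triangle v c (π c)
          rw [dist_comm c (π c)] at htri
          linarith
        have h3 : dist v (π c) ^ p ≤ (2 * dist v c) ^ p :=
          Real.rpow_le_rpow dist_nonneg h2 (by linarith)
        have h4 : (2 * dist v c) ^ p = (2:ℝ) ^ p * dist v c ^ p :=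
          Real.mul_rpow (by norm_num) dist_nonneg
        simp only [hg, hvZ, if_false, hceq]
        calc Ci.inf' hCine (fun c => dist v c ^ p) ≤ (2 * dist v c) ^ p := le_trans h1 h3
          _ = (2:ℝ) ^ p * dist v c ^ p := h4
    refine le_trans (Finset.sum_le_sum fun i _ => key i) ?_
    -- ∑ i, ∑ v ∈ P i, g v = ∑ v, g v = 2^p * x
    have hU : (Finset.univ : Finset (Fin m)).biUnion P = Finset.univ := by
      ext v
      simpa using hcover v
    have hpd : (↑(Finset.univ : Finset (Fin m)) : Set (Fin m)).PairwiseDisjoint P :=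
      fun i _ j _ hij => hdisj i j hij
    rw [← Finset.sum_biUnion hpd, hU]
    have hZsub : Z ⊆ Finset.univ := Finset.subset_univ Z
    rw [← Finset.sum_sdiff hZsub]
    have hZ0 : ∑ v ∈ Z, g v = 0 :=
      Finset.sum_eq_zero fun v hv => by simp [hg, hv]
    rw [hZ0, add_zero, Finset.mul_sum]
    refine le_of_eq (Finset.sum_congr rfl ?_)
    intro v hv
    have : v ∉ Z := (Finset.mem_sdiff.mp hv).2
    simp [hg, this]
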